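/- Let G_σ be a connected signed simple graph with s vertices, let K be a field of characteristic ≠ 2, and let 𝕏 ⊆ P^{s−1}(K) be the set of projective points given by the columns of the incidence matrix of G_σ. Then the frustration index φ(G_σ) equals min{|𝕏 \ V_𝕏(h)|} over all linear forms h = a₁t₁ + ⋯ + a_s t_s with each a_i ∈ {1, −1}, where V_𝕏(h) is the set of points of 𝕏 at which h vanishes. -/

import Mathlib

open Classical Set

structure SignedGraph (V E : Type*) where
  ends : E → V × V
  sign : E → Bool

namespace SignedGraph

variable {V E : Type*} (G : SignedGraph V E)

def touches (e : E) (v : V) : Prop := (G.ends e).1 = v ∨ (G.ends e).2 = v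

def verts (X : Set E) : Set V := {v | ∃ e ∈ X, G.touches e v}

noncomputable def deg (X : Set E) (v : V) : ℕ :=
  ∑ᶠ e ∈ X, ((if (G.ends e).1 = v then 1 else 0) + (if (G.ends e).2 = v then 1 else 0))

def adjIn (X : Set E) (u v : V) : Prop :=
  ∃ e ∈ X, G.ends e = (u, v) ∨ G.ends e = (v, u)

def ConnSet (X : Set E) : Prop :=
  ∀ u ∈ G.verts X, ∀ v ∈ G.verts X, Relation.EqvGen (G.adjIn X) u v

def IsCycle (C : Set E) : Prop :=
  C.Nonempty ∧ G.ConnSet C ∧ ∀ v ∈ G.verts C, G.deg C v = 2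

noncomputable def negCount (C : Set E) : ℕ := {e ∈ C | G.sign e = false}.ncard

def IsBalancedCycle (C : Set E) : Prop := G.IsCycle C ∧ Even (G.negCount C)

def IsUnbalancedCycle (C : Set E) : Prop := G.IsCycle C ∧ ¬ Even (G.negCount C)

def IsPath (P : Set E) : Prop :=
  P.Nonempty ∧ G.ConnSet P ∧ (∀ e ∈ P, (G.ends e).1 ≠ (G.ends e).2) ∧
    (∀ v ∈ G.verts P, G.deg P v ≤ 2) ∧
    {v ∈ G.verts P | G.deg P v = 1}.ncard = 2

def IsBowtie (B : Set E) : Prop :=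
  (∃ C₁ C₂, G.IsUnbalancedCycle C₁ ∧ G.IsUnbalancedCycle C₂ ∧ B = C₁ ∪ C₂ ∧
      ∃ v, G.verts C₁ ∩ G.verts C₂ = {v}) ∨
  (∃ C₁ C₂ P, G.IsUnbalancedCycle C₁ ∧ G.IsUnbalancedCycle C₂ ∧ G.IsPath P ∧
      Disjoint (G.verts C₁) (G.verts C₂) ∧ B = C₁ ∪ C₂ ∪ P ∧
      (∃ v₁, G.verts P ∩ G.verts C₁ = {v₁} ∧ G.deg P v₁ = 1) ∧
      (∃ v₂, G.verts P ∩ G.verts C₂ = {v₂} ∧ G.deg P v₂ = 1) ∧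
      Disjoint P C₁ ∧ Disjoint P C₂)

def comp (X : Set E) (v : V) : Set V := {w | Relation.EqvGen (G.adjIn X) v w}

noncomputable def numComponents (X : Set E) : ℕ := {K | ∃ v, K = G.comp X v}.ncard

def BalancedComponent (X : Set E) (K : Set V) : Prop :=
  (∃ v, K = G.comp X v) ∧ ∀ C ⊆ X, G.verts C ⊆ K → G.IsCycle C → Even (G.negCount C)

noncomputable def numBalancedComponents (X : Set E) : ℕ := {K | G.BalancedComponent X K}.ncard

def Balanced : Prop := ∀ C, G.IsCycle C → Even (G.negCount C)

def Connected : Prop := ∀ u v : V, Relation.EqvGen (G.adjIn Set.univ) u v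

noncomputable def incCol (K : Type*) [Field K] (e : E) : V → K := fun v =>
  (if (G.ends e).1 = v then 1 else 0) +
    (if (G.ends e).2 = v then (if G.sign e then -1 else 1) else 0)

noncomputable def incMatrix (K : Type*) [Field K] : Matrix V E K := fun v e => G.incCol K e v

noncomputable def code (K : Type*) [Field K] : Submodule K (E → K) :=
  Submodule.span K (Set.range fun v => fun e => G.incCol K e v)

end SignedGraph

noncomputable def codeSupport {ι F : Type*} [Field F] (D : Submodule F (ι → F)) : Set ι :=
  {i | ∃ v ∈ D, v i ≠ 0}

noncomputable def GHW {ι F : Type*} [Field F] (C : Submodule F (ι → F)) (r : ℕ) : ℕ :=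
  sInf {n | ∃ D : Submodule F (ι → F), D ≤ C ∧ Module.finrank F D = r ∧ (codeSupport D).ncard = n}

noncomputable def dotL {ι F : Type*} [Fintype ι] [Field F] (v : ι → F) : (ι → F) →ₗ[F] F where
  toFun w := ∑ i, v i * w i
  map_add' a b := by simp [mul_add, Finset.sum_add_distrib]
  map_smul' c a := by simp [Finset.mul_sum, mul_left_comm, smul_eq_mul]

noncomputable def dualCode {ι F : Type*} [Fintype ι] [Field F]
    (C : Submodule F (ι → F)) : Submodule F (ι → F) :=
  ⨅ v ∈ C, LinearMap.ker (dotL v)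

def NonRedundant {α : Type*} {r : ℕ} (C : Fin r → Set α) : Prop :=
  ∀ j, (⋃ i, ⋃ (_ : i ≠ j), C i) ⊂ ⋃ i, C i

/-- The set of projective points defined by the columns of the incidence matrix. -/
noncomputable def projPoints {V E : Type*} (G : SignedGraph V E) (K : Type*) [Field K] :
    Set (Projectivization K (V → K)) :=
  {p | ∃ (e : E) (h : G.incCol K e ≠ 0), p = Projectivization.mk K (G.incCol K e) h}

/-- The linear form with coefficients `a` vanishes at the projective point `p`. -/
def vanishesAt {V K : Type*} [Fintype V] [Field K] (a : V → K)
    (p : Projectivization K (V → K)) : Prop :=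
  ∀ (w : V → K) (hw : w ≠ 0), p = Projectivization.mk K w hw → ∑ v, a v * w v = 0

/-- The frustration index: the least number of edges whose deletion leaves a
balanced signed graph. -/
noncomputable def frustrationIndex {V E : Type*} (G : SignedGraph V E) : ℕ :=
  sInf {n | ∃ X : Set E,
    (∀ C ⊆ Set.univ \ X, G.IsCycle C → Even (G.negCount C)) ∧ X.ncard = n}

namespace SignedGraph

variable {V E : Type*} (G : SignedGraph V E)

/-- walks -/
def IsWalk (Y : Set E) : V → List (E × V) → V → Prop
  | u, [], v => u = v
  | u, p :: l, v => p.1 ∈ Y ∧ (G.ends p.1 = (u, p.2) ∨ G.ends p.1 = (p.2, u)) ∧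
      IsWalk Y p.2 l v

variable {G}

lemma walk_append {Y : Set E} {u x v : V} {l m : List (E × V)}
    (h1 : G.IsWalk Y u l x) (h2 : G.IsWalk Y x m v) : G.IsWalk Y u (l ++ m) v := by
  induction l generalizing u with
  | nil => cases h1; simpa using h2
  | cons p l ih => exact ⟨h1.1, h1.2.1, ih h1.2.2⟩

lemma walk_append_iff {Y : Set E} {u v : V} {l m : List (E × V)} :
    G.IsWalk Y u (l ++ m) v ↔ ∃ x, G.IsWalk Y u l x ∧ G.IsWalk Y x m v := by
  induction l generalizing u with
  | nil => simp [IsWalk]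
  | cons p l ih =>
    constructor
    · rintro ⟨h1, h2, h3⟩
      obtain ⟨x, hx1, hx2⟩ := ih.1 h3
      exact ⟨x, ⟨h1, h2, hx1⟩, hx2⟩
    · rintro ⟨x, ⟨h1, h2, h3⟩, h4⟩
      exact ⟨h1, h2, ih.2 ⟨x, h3, h4⟩⟩

lemma walk_reverse {Y : Set E} {u v : V} {l : List (E × V)} (h : G.IsWalk Y u l v) :
    ∃ l', G.IsWalk Y v l' u ∧ l'.map Prod.fst = (l.map Prod.fst).reverse ∧
      (v :: l'.map Prod.snd) = (u :: l.map Prod.snd).reverse := by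
  induction l generalizing u with
  | nil => cases h; exact ⟨[], rfl, by simp, by simp⟩
  | cons p l ih =>
    obtain ⟨he, hor, hw⟩ := h
    obtain ⟨m, hm, hf, hs⟩ := ih hw
    refine ⟨m ++ [(p.1, u)], walk_append hm ⟨he, hor.symm.imp ?_ ?_, rfl⟩, ?_, ?_⟩
    · intro h; rw [h]
    · intro h; rw [h]
    · simp [hf]
    · simpa using congrArg (· ++ [u]) hs

lemma exists_walk {Y : Set E} {u v : V} (h : Relation.EqvGen (G.adjIn Y) u v) :
    ∃ l, G.IsWalk Y u l v := by
  induction h with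
  | rel a b hab =>
    obtain ⟨e, he, hor⟩ := hab
    exact ⟨[(e, b)], he, hor, rfl⟩
  | refl a => exact ⟨[], rfl⟩
  | symm a b _ ih =>
    obtain ⟨l, hl⟩ := ih
    obtain ⟨l', hl', -, -⟩ := walk_reverse hl
    exact ⟨l', hl'⟩
  | trans a b c _ _ ih1 ih2 =>
    obtain ⟨l, hl⟩ := ih1
    obtain ⟨m, hm⟩ := ih2
    exact ⟨l ++ m, walk_append hl hm⟩

lemma walk_last_eq {Y : Set E} {u v : V} {m : List (E × V)} {p : E × V}
    (h : G.IsWalk Y u (m ++ [p]) v) : v = p.2 := by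
  obtain ⟨y, -, h2⟩ := walk_append_iff.1 h
  obtain ⟨-, -, h3⟩ := h2
  exact h3.symm

lemma walk_shorten {Y : Set E} {u v : V} {l : List (E × V)} (h : G.IsWalk Y u l v) :
    ∃ l', G.IsWalk Y u l' v ∧ l'.length ≤ l.length ∧ (u :: l'.map Prod.snd).Nodup := by
  generalize hn : l.length = n
  induction n using Nat.strong_induction_on generalizing u l with
  | _ n ih =>
  subst hn
  by_cases hnd : (u :: l.map Prod.snd).Nodup
  · exact ⟨l, h, le_rfl, hnd⟩
  rw [List.nodup_cons] at hnd
  push_neg at hnd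
  by_cases hu : u ∈ l.map Prod.snd
  · -- shortcut: drop everything up to the occurrence of u
    obtain ⟨p, hp, hpu⟩ := List.mem_map.1 hu
    obtain ⟨s, t, rfl⟩ := List.append_of_mem hp
    have h' : G.IsWalk Y u ((s ++ [p]) ++ t) v := by simpa using h
    obtain ⟨x, hx1, hx2⟩ := walk_append_iff.1 h'
    have hxp : x = p.2 := walk_last_eq hx1
    have htw : G.IsWalk Y u t v := by rw [hpu] at hxp; rwa [hxp] at hx2
    have hlen : t.length < (s ++ p :: t).length := by simp; omega
    obtain ⟨l', h1, h2, h3⟩ := ih t.length hlen htw rfl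
    exact ⟨l', h1, by omega, h3⟩
  · -- duplicate inside the tail vertex list
    have hmd : ¬ (l.map Prod.snd).Nodup := fun hh => hnd (fun hc => hu hc) hh |>.elim
    match l, h with
    | [], _ => simp at hmd
    | p :: m, ⟨he, hor, hw⟩ =>
      have hlen : m.length < (p :: m).length := by simp
      obtain ⟨m', h1, h2, h3⟩ := ih m.length hlen hw rfl
      by_cases hum : u ∈ (p :: m').map Prod.snd
      · -- shortcut again on the new walk
        have hw' : G.IsWalk Y u (p :: m') v := ⟨he, hor, h1⟩
        obtain ⟨q, hq, hqu⟩ := List.mem_map.1 hum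
        obtain ⟨s, t, hst⟩ := List.append_of_mem hq
        have h' : G.IsWalk Y u ((s ++ [q]) ++ t) v := by rw [hst] at hw'; simpa using hw'
        obtain ⟨x, hx1, hx2⟩ := walk_append_iff.1 h'
        have hxp : x = q.2 := walk_last_eq hx1
        have htw : G.IsWalk Y u t v := by rw [hqu] at hxp; rwa [hxp] at hx2
        have hlt : t.length < (p :: m).length := by
          have : (p :: m').length = s.length + 1 + t.length := by
            rw [hst]; simp; omega
          have hm' : (p :: m').length ≤ (p :: m).length := by simp [Nat.succ_le_succ h2]
          simp only [List.length_cons] at *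
          omega
        obtain ⟨l', g1, g2, g3⟩ := ih t.length hlt htw rfl
        exact ⟨l', g1, by omega, g3⟩
      · refine ⟨p :: m', ⟨he, hor, h1⟩, by simpa using Nat.succ_le_succ h2, ?_⟩
        rw [List.nodup_cons]
        refine ⟨hum, ?_⟩
        simpa using h3


lemma walk_edges_mem {Y : Set E} {u v : V} {l : List (E × V)} (h : G.IsWalk Y u l v)
    {f : E} (hf : f ∈ l.map Prod.fst) : f ∈ Y := by
  induction l generalizing u with
  | nil => simp at hf
  | cons p m ih =>
    rcases List.mem_cons.1 hf with hf | hf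
    · exact hf ▸ h.1
    · exact ih h.2.2 hf

lemma walk_last_mem {Y : Set E} {u v : V} {l : List (E × V)} (h : G.IsWalk Y u l v)
    (hne : l ≠ []) : v ∈ l.map Prod.snd := by
  induction l generalizing u with
  | nil => simp at hne
  | cons p m ih =>
    rcases m with _ | ⟨q, m⟩
    · obtain ⟨-, -, h3⟩ := h
      simp [IsWalk] at h3
      simp [h3]
    · simpa using Or.inr (ih h.2.2 (by simp))

lemma walk_edge_verts {Y : Set E} {u v : V} {l : List (E × V)} (h : G.IsWalk Y u l v)
    {f : E} (hf : f ∈ l.map Prod.fst) :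
    ∃ p q, (G.ends f = (p, q) ∨ G.ends f = (q, p)) ∧ p ∈ u :: l.map Prod.snd ∧
      q ∈ l.map Prod.snd := by
  induction l generalizing u with
  | nil => simp at hf
  | cons p m ih =>
    rcases List.mem_cons.1 hf with hf | hf
    · subst hf
      exact ⟨u, p.2, h.2.1, by simp, by simp⟩
    · obtain ⟨a, b, hab, ha, hb⟩ := ih h.2.2 hf
      exact ⟨a, b, hab, by simpa using Or.inr (by simpa using ha), by simp [hb]⟩

lemma walk_edges_nodup {Y : Set E} {u v : V} {l : List (E × V)} (h : G.IsWalk Y u l v)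
    (hnd : (u :: l.map Prod.snd).Nodup) : (l.map Prod.fst).Nodup := by
  induction l generalizing u with
  | nil => simp
  | cons p m ih =>
    rw [List.map_cons, List.nodup_cons]
    rw [List.map_cons, List.nodup_cons] at hnd
    refine ⟨?_, ih h.2.2 hnd.2⟩
    intro hmem
    obtain ⟨a, b, hab, ha, hb⟩ := walk_edge_verts h.2.2 hmem
    have hu : u ∉ p.2 :: m.map Prod.snd := hnd.1
    have hane : a ≠ u := fun hh => hu (hh ▸ ha)
    have hbne : b ≠ u := fun hh => hu (hh ▸ (List.mem_cons.2 (Or.inr hb)))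
    rcases h.2.1 with h1 | h1 <;> rcases hab with h2 | h2 <;>
      rw [h1] at h2 <;>
      exact absurd (congrArg Prod.fst h2) (by
        first
          | exact fun hh => hane (by simpa using hh.symm)
          | exact fun hh => hbne (by simpa using hh.symm)
          | (exact absurd (congrArg Prod.snd h2) (by
              first
                | exact fun hh => hane (by simpa using hh.symm)
                | exact fun hh => hbne (by simpa using hh.symm))))


variable (G)

noncomputable def edgeDeg (f : E) (w : V) : ℕ :=
  (if (G.ends f).1 = w then 1 else 0) + (if (G.ends f).2 = w then 1 else 0)

noncomputable def listDeg (l : List (E × V)) (w : V) : ℕ :=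
  (l.map (fun p => G.edgeDeg p.1 w)).sum

variable {G}

lemma edgeDeg_eq {f : E} {a b : V} (h : G.ends f = (a, b) ∨ G.ends f = (b, a)) (w : V) :
    G.edgeDeg f w = (if a = w then 1 else 0) + (if b = w then 1 else 0) := by
  rcases h with h | h <;> rw [edgeDeg, h] <;> simp [add_comm]

lemma listDeg_cons {p : E × V} {l : List (E × V)} {w : V} :
    G.listDeg (p :: l) w = G.edgeDeg p.1 w + G.listDeg l w := by
  simp [listDeg]

lemma listDeg_notmem {Y : Set E} {u v w : V} {l : List (E × V)} (h : G.IsWalk Y u l v)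
    (hw : w ∉ u :: l.map Prod.snd) : G.listDeg l w = 0 := by
  induction l generalizing u with
  | nil => simp [listDeg]
  | cons p m ih =>
    rw [listDeg_cons, edgeDeg_eq h.2.1]
    simp only [List.mem_cons, List.map_cons] at hw
    push_neg at hw
    rw [if_neg (fun hh => hw.1 hh.symm), if_neg (fun hh => hw.2.1 hh.symm)]
    have := ih h.2.2 (by simp only [List.mem_cons]; push_neg; exact ⟨fun hh => hw.2.1 hh, hw.2.2⟩)
    omega

lemma listDeg_start {Y : Set E} {u v : V} {l : List (E × V)} (h : G.IsWalk Y u l v)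
    (hu : u ∉ l.map Prod.snd) (hne : l ≠ []) : G.listDeg l u = 1 := by
  match l, h with
  | p :: m, ⟨he, hor, hw⟩ =>
    rw [listDeg_cons, edgeDeg_eq hor, if_pos rfl]
    simp only [List.map_cons, List.mem_cons] at hu
    push_neg at hu
    rw [if_neg (fun hh => hu.1 hh.symm)]
    have : G.listDeg m u = 0 := listDeg_notmem hw (by
      simp only [List.mem_cons]; push_neg; exact ⟨fun hh => hu.1 hh, hu.2⟩)
    omega

lemma listDeg_perm_invariant {l l' : List (E × V)} (w : V)
    (hp : l'.map Prod.fst = (l.map Prod.fst).reverse) :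
    G.listDeg l' w = G.listDeg l w := by
  have : G.listDeg l' w = ((l'.map Prod.fst).map (fun f => G.edgeDeg f w)).sum := by
    rw [List.map_map]; rfl
  rw [this, hp, List.map_reverse, List.sum_reverse, List.map_map]; rfl

lemma listDeg_end {Y : Set E} {u v : V} {l : List (E × V)} (h : G.IsWalk Y u l v)
    (hnd : (u :: l.map Prod.snd).Nodup) (hne : l ≠ []) : G.listDeg l v = 1 := by
  obtain ⟨l', h', hf, hs⟩ := walk_reverse h
  rw [← listDeg_perm_invariant (G := G) v hf]
  have hnd' : (v :: l'.map Prod.snd).Nodup := by rw [hs]; exact List.nodup_reverse.2 hnd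
  have hne' : l' ≠ [] := by
    intro hh
    rw [hh] at hf
    have : l.map Prod.fst = [] := by simpa using hf.symm
    simp [List.map_eq_nil_iff] at this
    exact hne this
  exact listDeg_start h' (List.nodup_cons.1 hnd').1 hne'

lemma listDeg_mid {Y : Set E} {u v w : V} {l : List (E × V)} (h : G.IsWalk Y u l v)
    (hnd : (u :: l.map Prod.snd).Nodup) (hwu : w ≠ u) (hwv : w ≠ v)
    (hw : w ∈ l.map Prod.snd) : G.listDeg l w = 2 := by
  induction l generalizing u with
  | nil => simp at hw
  | cons p m ih =>
    obtain ⟨he, hor, hwalk⟩ := h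
    rw [listDeg_cons, edgeDeg_eq hor, if_neg (fun hh => hwu hh.symm)]
    simp only [List.map_cons, List.mem_cons] at hw
    rw [List.map_cons, List.nodup_cons] at hnd
    have hnd2 : (p.2 :: m.map Prod.snd).Nodup := hnd.2
    rcases hw with hw | hw
    · rw [if_pos hw.symm]
      rcases m with _ | ⟨q, m⟩
      · have : p.2 = v := hwalk
        exact absurd (hw.trans this) hwv
      · have : G.listDeg (q :: m) w = 1 := by
          rw [hw]
          exact listDeg_start hwalk (List.nodup_cons.1 hnd2).1 (by simp)
        omega
    · have hwp : w ≠ p.2 := by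
        intro hh
        exact (List.nodup_cons.1 hnd2).1 (hh ▸ hw)
      rw [if_neg (fun hh => hwp hh.symm)]
      have := ih hwalk hnd2 hwp hw
      omega


variable (G)

noncomputable def sg2 (e : E) : ZMod 2 := if G.sign e then 0 else 1

variable {G}

lemma deg_coe [Fintype E] (s : Finset E) (w : V) :
    G.deg ↑s w = ∑ f ∈ s, G.edgeDeg f w := by
  rw [deg, finsum_mem_coe_finset]; rfl

lemma deg_eq_zero_of_not_mem_verts [Fintype E] (s : Finset E) {w : V}
    (hw : w ∉ G.verts ↑s) : G.deg ↑s w = 0 := by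
  rw [deg_coe]
  refine Finset.sum_eq_zero fun f hf => ?_
  rw [edgeDeg]
  by_cases h1 : (G.ends f).1 = w
  · exact absurd ⟨f, hf, Or.inl h1⟩ hw
  by_cases h2 : (G.ends f).2 = w
  · exact absurd ⟨f, hf, Or.inr h2⟩ hw
  simp [h1, h2]

lemma eqvgen_mono {X Z : Set E} (hXZ : X ⊆ Z) {a b : V}
    (h : Relation.EqvGen (G.adjIn X) a b) : Relation.EqvGen (G.adjIn Z) a b := by
  refine Relation.EqvGen.mono ?_ _ _ h
  rintro x y ⟨f, hf, hor⟩
  exact ⟨f, hXZ hf, hor⟩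

lemma walk_conn {Y Z : Set E} {u v : V} {l : List (E × V)} (h : G.IsWalk Y u l v)
    (hZ : ∀ f ∈ l.map Prod.fst, f ∈ Z) {w : V} (hw : w ∈ u :: l.map Prod.snd) :
    Relation.EqvGen (G.adjIn Z) u w := by
  induction l generalizing u with
  | nil => simp at hw; subst hw; exact Relation.EqvGen.refl w
  | cons p m ih =>
    obtain ⟨he, hor, hwalk⟩ := h
    have hadj : Relation.EqvGen (G.adjIn Z) u p.2 :=
      Relation.EqvGen.rel _ _ ⟨p.1, hZ p.1 (by simp), by tauto⟩
    rcases List.mem_cons.1 hw with hw | hw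
    · subst hw; exact Relation.EqvGen.refl w
    · refine Relation.EqvGen.trans _ _ _ hadj (ih hwalk (fun f hf => hZ f (by simp [hf])) hw)

lemma sigSum_eq [Fintype V] {Y : Set E} {u v : V} {l : List (E × V)}
    (h : G.IsWalk Y u l v) {b : V → ZMod 2}
    (hb : ∀ e ∈ Y, b (G.ends e).1 + b (G.ends e).2 = G.sg2 e) :
    (l.map (fun p => G.sg2 p.1)).sum = b u + b v := by
  induction l generalizing u with
  | nil =>
    cases h
    simp
    have : ∀ x : ZMod 2, x + x = 0 := by decide
    exact (this _).symm
  | cons p m ih =>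
    obtain ⟨he, hor, hwalk⟩ := h
    have h1 : G.sg2 p.1 = b u + b p.2 := by
      have := hb p.1 he
      rcases hor with hh | hh <;> rw [hh] at this <;> simp at this <;>
        rw [← this] <;> ring
    rw [List.map_cons, List.sum_cons, h1, ih hwalk]
    have : ∀ x y z : ZMod 2, x + y + (y + z) = x + z := by decide
    exact this _ _ _

lemma negCount_coe [Fintype E] (s : Finset E) :
    ((G.negCount ↑s : ℕ) : ZMod 2) = ∑ f ∈ s, G.sg2 f := by
  classical
  have h1 : {e ∈ (↑s : Set E) | G.sign e = false} = ↑(s.filter (fun e => G.sign e = false)) := by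
    ext f; simp
  rw [negCount, h1, Set.ncard_coe_finset]
  rw [Finset.sum_congr rfl (fun f _ => show G.sg2 f = if G.sign f = false then (1 : ZMod 2) else 0
    by rw [sg2]; rcases G.sign f with _ | _ <;> simp)]
  rw [Finset.sum_boole]


lemma even_cast_zmod2 {n : ℕ} (h : Even n) : (n : ZMod 2) = 0 := by
  obtain ⟨k, rfl⟩ := h
  push_cast
  have : ∀ x : ZMod 2, x + x = 0 := by decide
  exact this _

lemma cast_zmod2_even {n : ℕ} (h : (n : ZMod 2) = 0) : Even n := by
  rw [ZMod.natCast_eq_zero_iff] at h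
  exact even_iff_two_dvd.2 h

lemma exists_odd_cycle [Fintype V] [Fintype E] {Y : Set E} {e : E} (he : e ∉ Y)
    (hle : (G.ends e).1 ≠ (G.ends e).2)
    (hcon : Relation.EqvGen (G.adjIn Y) (G.ends e).1 (G.ends e).2)
    {b : V → ZMod 2} (hb : ∀ f ∈ Y, b (G.ends f).1 + b (G.ends f).2 = G.sg2 f)
    (hne : b (G.ends e).1 + b (G.ends e).2 ≠ G.sg2 e) :
    ∃ C ⊆ insert e Y, G.IsCycle C ∧ ¬ Even (G.negCount C) := by
  classical
  set u := (G.ends e).1 with hu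
  set v := (G.ends e).2 with hv
  obtain ⟨l0, hl0⟩ := exists_walk hcon
  obtain ⟨l, hl, -, hnd⟩ := walk_shorten hl0
  have hlne : l ≠ [] := by
    rintro rfl
    exact hle hl
  have hedgesY : ∀ f ∈ l.map Prod.fst, f ∈ Y := fun f hf => walk_edges_mem hl hf
  have hndE : (l.map Prod.fst).Nodup := walk_edges_nodup hl hnd
  have henl : e ∉ (l.map Prod.fst).toFinset := by
    intro hmem
    exact he (hedgesY e (List.mem_toFinset.1 hmem))
  set F : Finset E := insert e (l.map Prod.fst).toFinset with hF
  have hsub : (↑F : Set E) ⊆ insert e Y := by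
    intro f hf
    rcases Finset.mem_insert.1 hf with h | h
    · exact h ▸ Set.mem_insert _ _
    · exact Set.mem_insert_of_mem _ (hedgesY f (List.mem_toFinset.1 h))
  have hvertsub : ∀ w ∈ G.verts ↑F, w ∈ u :: l.map Prod.snd := by
    rintro w ⟨f, hf, htf⟩
    rcases Finset.mem_insert.1 hf with h | h
    · subst h
      rcases htf with h | h
      · exact h ▸ List.mem_cons_self
      · rw [← h, ← hv]
        exact List.mem_cons.2 (Or.inr (walk_last_mem hl hlne))
    · obtain ⟨p, q, hpq, hp, hq⟩ := walk_edge_verts hl (List.mem_toFinset.1 h)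
      rcases htf with h' | h' <;> rcases hpq with h2 | h2 <;> rw [h2] at h' <;>
        simp only [] at h' <;> subst h' <;>
        first
          | exact hp
          | exact List.mem_cons.2 (Or.inr hq)
  have hsum : ∀ w, G.deg ↑F w = G.edgeDeg e w + G.listDeg l w := by
    intro w
    rw [deg_coe, hF, Finset.sum_insert henl,
      List.sum_toFinset _ hndE, List.map_map, listDeg]
    rfl
  have hUV : u ∉ l.map Prod.snd := (List.nodup_cons.1 hnd).1
  refine ⟨↑F, hsub, ⟨⟨e, Finset.mem_insert_self _ _⟩, ?_, ?_⟩, ?_⟩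
  · -- connectivity
    intro w1 hw1 w2 hw2
    have hEsub : ∀ f ∈ l.map Prod.fst, f ∈ (↑F : Set E) := by
      intro f hf
      exact Finset.mem_insert_of_mem (List.mem_toFinset.2 hf)
    have h1 := walk_conn hl hEsub (hvertsub w1 hw1)
    have h2 := walk_conn hl hEsub (hvertsub w2 hw2)
    exact Relation.EqvGen.trans _ _ _ (Relation.EqvGen.symm _ _ h1) h2
  · -- degrees
    intro w hw
    have hwl := hvertsub w hw
    rw [hsum]
    have hedeg : ∀ z, G.edgeDeg e z = (if u = z then 1 else 0) + (if v = z then 1 else 0) := by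
      intro z; rw [edgeDeg, ← hu, ← hv]
    rcases List.mem_cons.1 hwl with heq | hwl'
    · have h1 : G.edgeDeg e w = 1 := by
        rw [hedeg, if_pos heq.symm, if_neg (fun hh => hle (hh.trans heq).symm)]
      have h2 : G.listDeg l w = 1 := heq ▸ listDeg_start hl hUV hlne
      omega
    · by_cases hwv : w = v
      · have h1 : G.edgeDeg e w = 1 := by
          rw [hedeg, if_neg (fun hh => hle (hh.trans hwv)), if_pos hwv.symm]
        have h2 : G.listDeg l w = 1 := hwv ▸ listDeg_end hl hnd hlne
        omega
      · have hwu : w ≠ u := by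
          rintro rfl
          exact hUV hwl'
        have h1 : G.edgeDeg e w = 0 := by
          rw [hedeg, if_neg (fun hh => hwu hh.symm), if_neg (fun hh => hwv hh.symm)]
        have h2 : G.listDeg l w = 2 := listDeg_mid hl hnd hwu hwv hwl'
        omega
  · -- odd negative count
    intro hev
    have hcast : ((G.negCount ↑F : ℕ) : ZMod 2) = 0 := even_cast_zmod2 hev
    have hsig : ((G.negCount ↑F : ℕ) : ZMod 2) = G.sg2 e + (b u + b v) := by
      rw [negCount_coe, hF, Finset.sum_insert henl, List.sum_toFinset _ hndE,
        List.map_map]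
      congr 1
      exact sigSum_eq hl hb
    have hbe : b u + b v = G.sg2 e + 1 := by
      revert hne
      generalize b u + b v = x
      generalize G.sg2 e = y
      revert x y
      decide
    rw [hsig, hbe] at hcast
    revert hcast
    generalize G.sg2 e = y
    revert y
    decide


lemma switchable [Fintype V] [Fintype E]
    (hloop : ∀ e : E, (G.ends e).1 ≠ (G.ends e).2) (Y : Finset E)
    (hY : ∀ C ⊆ (↑Y : Set E), G.IsCycle C → Even (G.negCount C)) :
    ∃ b : V → ZMod 2, ∀ e ∈ Y, b (G.ends e).1 + b (G.ends e).2 = G.sg2 e := by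
  classical
  induction Y using Finset.induction_on with
  | empty => exact ⟨0, fun e he => absurd he (Finset.notMem_empty e)⟩
  | insert e Y henY ih =>
    obtain ⟨b, hb⟩ := ih (fun C hC hcyc => hY C
      (hC.trans (by rw [Finset.coe_insert]; exact Set.subset_insert _ _)) hcyc)
    have hbY : ∀ f ∈ (↑Y : Set E), b (G.ends f).1 + b (G.ends f).2 = G.sg2 f :=
      fun f hf => hb f hf
    by_cases hsat : b (G.ends e).1 + b (G.ends e).2 = G.sg2 e
    · refine ⟨b, fun f hf => ?_⟩
      rcases Finset.mem_insert.1 hf with rfl | hf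
      · exact hsat
      · exact hb f hf
    by_cases hcon : Relation.EqvGen (G.adjIn ↑Y) (G.ends e).1 (G.ends e).2
    · exfalso
      obtain ⟨C, hCsub, hcyc, hodd⟩ := exists_odd_cycle
        (by simpa using henY) (hloop e) hcon hbY hsat
      exact hodd (hY C (by rwa [Finset.coe_insert]) hcyc)
    · set u := (G.ends e).1 with hu
      refine ⟨fun w => b w + (if w ∈ G.comp ↑Y u then 1 else 0), fun f hf => ?_⟩
      rcases Finset.mem_insert.1 hf with rfl | hf
      · have h1 : u ∈ G.comp ↑Y u := Relation.EqvGen.refl u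
        have h2 : (G.ends f).2 ∉ G.comp ↑Y u := hcon
        simp only []
        rw [← hu, if_pos h1, if_neg h2, add_zero]
        have hbe : b u + b (G.ends f).2 = G.sg2 f + 1 := by
          revert hsat
          generalize b u + b (G.ends f).2 = x
          generalize G.sg2 f = y
          revert x y
          decide
        rw [add_right_comm, hbe]
        have : ∀ y : ZMod 2, y + 1 + 1 = y := by decide
        exact this _
      · have hadj : G.adjIn ↑Y (G.ends f).1 (G.ends f).2 := ⟨f, hf, Or.inl rfl⟩
        have hiff : (G.ends f).1 ∈ G.comp ↑Y u ↔ (G.ends f).2 ∈ G.comp ↑Y u := by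
          constructor
          · intro h
            exact Relation.EqvGen.trans _ _ _ h (Relation.EqvGen.rel _ _ hadj)
          · intro h
            exact Relation.EqvGen.trans _ _ _ h
              (Relation.EqvGen.symm _ _ (Relation.EqvGen.rel _ _ hadj))
        have hc : (if (G.ends f).1 ∈ G.comp ↑Y u then (1 : ZMod 2) else 0) =
            (if (G.ends f).2 ∈ G.comp ↑Y u then 1 else 0) := by
          by_cases h : (G.ends f).1 ∈ G.comp ↑Y u
          · rw [if_pos h, if_pos (hiff.1 h)]
          · rw [if_neg h, if_neg (fun hh => h (hiff.2 hh))]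
        simp only []
        rw [hc]
        have key : ∀ x y c : ZMod 2, x + c + (y + c) = x + y := by decide
        rw [key]
        exact hb f hf


lemma frustrated_balanced [Fintype V] [Fintype E] (b : V → ZMod 2) (C : Set E)
    (hC : ∀ e ∈ C, b (G.ends e).1 + b (G.ends e).2 = G.sg2 e)
    (hcyc : G.IsCycle C) : Even (G.negCount C) := by
  classical
  obtain ⟨-, -, hdeg⟩ := hcyc
  set s : Finset E := C.toFinite.toFinset with hs
  have hsC : (↑s : Set E) = C := C.toFinite.coe_toFinset
  apply cast_zmod2_even
  rw [← hsC, negCount_coe]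
  have step1 : ∀ f ∈ s, G.sg2 f = ∑ w : V, b w * ((G.edgeDeg f w : ℕ) : ZMod 2) := by
    intro f hf
    have hfC : f ∈ C := hsC ▸ hf
    rw [← hC f hfC]
    have expand : ∀ w : V, b w * ((G.edgeDeg f w : ℕ) : ZMod 2) =
        (if (G.ends f).1 = w then b w else 0) + (if (G.ends f).2 = w then b w else 0) := by
      intro w
      by_cases h1 : (G.ends f).1 = w <;> by_cases h2 : (G.ends f).2 = w <;>
        simp only [edgeDeg, h1, h2, if_true, if_false, if_pos, if_neg, not_false_iff] <;>
        push_cast <;> ring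
    rw [Finset.sum_congr rfl (fun w _ => expand w), Finset.sum_add_distrib]
    congr 1 <;> simp [Finset.sum_ite_eq]
  rw [Finset.sum_congr rfl step1, Finset.sum_comm]
  refine Finset.sum_eq_zero fun w _ => ?_
  rw [← Finset.mul_sum, ← Nat.cast_sum, ← deg_coe]
  by_cases hw : w ∈ G.verts C
  · rw [hsC, hdeg w hw]
    have h2 : ((2 : ℕ) : ZMod 2) = 0 := rfl
    rw [h2, mul_zero]
  · rw [deg_eq_zero_of_not_mem_verts s (hsC ▸ hw)]
    simp

end SignedGraph

namespace SignedGraph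

variable {V E : Type*} (G : SignedGraph V E) {K : Type*} [Field K]

section Projective

variable [Fintype V] [Fintype E]
variable {G}

lemma incCol_fst (hloop : (G.ends e).1 ≠ (G.ends e).2) :
    G.incCol K e (G.ends e).1 = 1 := by
  rw [incCol, if_pos rfl, if_neg (fun h => hloop h.symm), add_zero]

lemma incCol_snd (hloop : (G.ends e).1 ≠ (G.ends e).2) :
    G.incCol K e (G.ends e).2 = (if G.sign e then -1 else 1) := by
  rw [incCol, if_neg hloop, if_pos rfl, zero_add]

lemma incCol_ne (hloop : (G.ends e).1 ≠ (G.ends e).2) : G.incCol K e ≠ (0 : V → K) := by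
  intro h
  have := congrFun h (G.ends e).1
  rw [incCol_fst hloop] at this
  exact one_ne_zero this

lemma incCol_support {w : V} (h : G.incCol K e w ≠ 0) :
    w = (G.ends e).1 ∨ w = (G.ends e).2 := by
  by_contra hc
  push_neg at hc
  rw [incCol, if_neg (fun hh => hc.1 hh.symm), if_neg (fun hh => hc.2 hh.symm), add_zero] at h
  exact h rfl

lemma dot_eq (hloop : (G.ends e).1 ≠ (G.ends e).2) (a : V → K) :
    ∑ w, a w * G.incCol K e w =
      a (G.ends e).1 + a (G.ends e).2 * (if G.sign e then -1 else 1) := by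
  classical
  simp only [incCol, mul_add]
  rw [Finset.sum_add_distrib]
  congr 1
  · simp [mul_ite, Finset.sum_ite_eq]
  · simp [mul_ite, Finset.sum_ite_eq]

variable (K)

noncomputable def Kval (b : V → ZMod 2) : V → K := fun v => if b v = 0 then 1 else -1

variable {K}

lemma Kval_pm (b : V → ZMod 2) (v : V) : Kval K b v = 1 ∨ Kval K b v = -1 := by
  rw [Kval]
  by_cases h : b v = 0 <;> simp [h]

lemma dot_zero_iff (hchar : ringChar K ≠ 2) (hloop : (G.ends e).1 ≠ (G.ends e).2)
    (b : V → ZMod 2) :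
    (∑ w, Kval K b w * G.incCol K e w = 0) ↔
      b (G.ends e).1 + b (G.ends e).2 = G.sg2 e := by
  have h2 : (2 : K) ≠ 0 := Ring.two_ne_zero hchar
  have hn1 : (-1 : K) ≠ 1 := Ring.neg_one_ne_one_of_char_ne_two hchar
  rw [dot_eq hloop]
  have hu := b (G.ends e).1
  rcases (by decide : ∀ x : ZMod 2, x = 0 ∨ x = 1) (b (G.ends e).1) with h1 | h1 <;>
    rcases (by decide : ∀ x : ZMod 2, x = 0 ∨ x = 1) (b (G.ends e).2) with hb2 | hb2 <;>
    rcases hsgn : G.sign e with _ | _ <;>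
    simp only [Kval, sg2, h1, hb2, hsgn, if_true, if_false, one_ne_zero, if_neg,
      if_pos, Bool.false_eq_true, not_false_iff] <;>
    norm_num <;>
    first
      | (intro h; exact hn1 (by linear_combination -h))
      | (intro h; exact h2 (by linear_combination h))
      | (intro h; exact h2 (by linear_combination -h))
      | decide
      | (exact ⟨fun h => absurd h h2, fun h => absurd h (by decide)⟩)

lemma mkpt_inj (hloop : ∀ e : E, (G.ends e).1 ≠ (G.ends e).2)
    (hsimple : ∀ e f : E, (G.ends e = G.ends f ∨ G.ends e = Prod.swap (G.ends f)) → e = f)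
    {e f : E}
    (h : Projectivization.mk K (G.incCol K e) (incCol_ne (hloop e)) =
      Projectivization.mk K (G.incCol K f) (incCol_ne (hloop f))) : e = f := by
  obtain ⟨c, hc⟩ := (Projectivization.mk_eq_mk_iff K _ _ _ _).1 h
  have heval : ∀ w, G.incCol K e w = (c : K) * G.incCol K f w := by
    intro w
    rw [← hc]
    simp [Units.smul_def]
  have hcne : (c : K) ≠ 0 := c.ne_zero
  have huf : (G.ends f).1 = (G.ends e).1 ∨ (G.ends f).1 = (G.ends e).2 := by
    apply incCol_support (K := K) (e := e)
    rw [heval, incCol_fst (hloop f), mul_one]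
    exact hcne
  have hvf : (G.ends f).2 = (G.ends e).1 ∨ (G.ends f).2 = (G.ends e).2 := by
    apply incCol_support (K := K) (e := e)
    rw [heval, incCol_snd (hloop f)]
    rcases G.sign f with _ | _ <;> simp [hcne]
  have hef : G.ends f = G.ends e ∨ G.ends f = Prod.swap (G.ends e) := by
    rcases huf with h1 | h1 <;> rcases hvf with h2 | h2
    · exact absurd (h1.trans h2.symm) (hloop f)
    · exact Or.inl (Prod.ext_iff.2 ⟨h1, h2⟩)
    · exact Or.inr (Prod.ext_iff.2 ⟨h1, h2⟩)
    · exact absurd (h1.trans h2.symm) (hloop f)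
  exact (hsimple f e hef).symm

lemma diff_eq_image (hchar : ringChar K ≠ 2)
    (hloop : ∀ e : E, (G.ends e).1 ≠ (G.ends e).2) (b : V → ZMod 2) :
    projPoints G K \ {p ∈ projPoints G K | vanishesAt (Kval K b) p} =
      (fun e : E => Projectivization.mk K (G.incCol K e) (incCol_ne (hloop e))) ''
        {e | ¬ (b (G.ends e).1 + b (G.ends e).2 = G.sg2 e)} := by
  ext p
  constructor
  · rintro ⟨⟨e, he, rfl⟩, hnot⟩
    refine ⟨e, ?_, rfl⟩
    intro hsat
    apply hnot
    refine ⟨⟨e, he, rfl⟩, ?_⟩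
    intro w hw hpw
    obtain ⟨c, hc⟩ := (Projectivization.mk_eq_mk_iff K _ _ _ _).1 hpw
    have hwc : ∀ x, w x = (c⁻¹ : Kˣ) * G.incCol K e x := by
      intro x
      rw [← hc]
      simp [Units.smul_def]
    have hdot : ∑ x, Kval K b x * G.incCol K e x = 0 := (dot_zero_iff hchar (hloop e) b).2 hsat
    calc ∑ x, Kval K b x * w x
        = (c⁻¹ : Kˣ) * ∑ x, Kval K b x * G.incCol K e x := by
          rw [Finset.mul_sum]
          exact Finset.sum_congr rfl fun x _ => by rw [hwc x]; ring
      _ = 0 := by rw [hdot, mul_zero]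
  · rintro ⟨e, hbad, rfl⟩
    refine ⟨⟨e, incCol_ne (hloop e), rfl⟩, ?_⟩
    rintro ⟨-, hvan⟩
    exact hbad ((dot_zero_iff hchar (hloop e) b).1
      (hvan (G.incCol K e) (incCol_ne (hloop e)) rfl))

end Projective

end SignedGraph

theorem stmt17 {V E : Type*} [Fintype V] [Fintype E] (G : SignedGraph V E)
    (K : Type*) [Field K] (hchar : ringChar K ≠ 2)
    (hconn : G.Connected)
    (hloop : ∀ e, (G.ends e).1 ≠ (G.ends e).2)
    (hsimple : ∀ e f, (G.ends e = G.ends f ∨ G.ends e = Prod.swap (G.ends f)) → e = f) :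
    frustrationIndex G =
      sInf {n | ∃ a : V → K, (∀ v, a v = 1 ∨ a v = -1) ∧
        (projPoints G K \ {p ∈ projPoints G K | vanishesAt a p}).ncard = n} := by
  classical
  have hn1 : (-1 : K) ≠ 1 := Ring.neg_one_ne_one_of_char_ne_two hchar
  set Fr : (V → ZMod 2) → Set E :=
    fun b => {e | ¬ (b (G.ends e).1 + b (G.ends e).2 = G.sg2 e)} with hFr
  have hcount : ∀ b : V → ZMod 2,
      (projPoints G K \ {p ∈ projPoints G K |
        vanishesAt (SignedGraph.Kval K b) p}).ncard = (Fr b).ncard := by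
    intro b
    rw [SignedGraph.diff_eq_image hchar hloop b]
    exact Set.ncard_image_of_injOn fun e _ f _ h => SignedGraph.mkpt_inj hloop hsimple h
  have hS2 : {n | ∃ a : V → K, (∀ v, a v = 1 ∨ a v = -1) ∧
        (projPoints G K \ {p ∈ projPoints G K | vanishesAt a p}).ncard = n}
      = {n | ∃ b : V → ZMod 2, (Fr b).ncard = n} := by
    ext n
    constructor
    · rintro ⟨a, ha, rfl⟩
      have hab : ∃ b : V → ZMod 2, a = SignedGraph.Kval K b := by
        refine ⟨fun v => if a v = 1 then 0 else 1, funext fun v => ?_⟩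
        rcases ha v with h | h
        · simp [SignedGraph.Kval, h]
        · have hne : a v ≠ 1 := by rw [h]; exact hn1
          simp [SignedGraph.Kval, h, hne, hn1]
      obtain ⟨b, rfl⟩ := hab
      exact ⟨b, (hcount b).symm⟩
    · rintro ⟨b, rfl⟩
      exact ⟨SignedGraph.Kval K b, SignedGraph.Kval_pm b, hcount b⟩
  rw [hS2]
  apply le_antisymm
  · have hne2 : {n | ∃ b : V → ZMod 2, (Fr b).ncard = n}.Nonempty := ⟨(Fr 0).ncard, 0, rfl⟩
    obtain ⟨b, hb⟩ := Nat.sInf_mem hne2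
    rw [frustrationIndex, ← hb]
    apply Nat.sInf_le
    refine ⟨Fr b, ?_, rfl⟩
    intro C hC hcyc
    refine SignedGraph.frustrated_balanced b C (fun e he => ?_) hcyc
    have h1 : e ∉ Fr b := (hC he).2
    simpa [hFr] using h1
  · have hS1ne : {n | ∃ X : Set E,
        (∀ C ⊆ Set.univ \ X, G.IsCycle C → Even (G.negCount C)) ∧ X.ncard = n}.Nonempty := by
      refine ⟨(Set.univ : Set E).ncard, Set.univ, fun C hC hcyc => ?_, rfl⟩
      obtain ⟨e, he⟩ := hcyc.1
      exact absurd (hC he) (by simp)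
    obtain ⟨X, hbal, hX⟩ := Nat.sInf_mem hS1ne
    have hYcoe : (↑((Set.univ \ X).toFinite.toFinset) : Set E) = Set.univ \ X :=
      (Set.univ \ X).toFinite.coe_toFinset
    obtain ⟨b, hb⟩ := SignedGraph.switchable hloop ((Set.univ \ X).toFinite.toFinset)
      (by rw [hYcoe]; exact hbal)
    have hsub : Fr b ⊆ X := by
      intro e he
      by_contra hx
      exact he (hb e ((Set.univ \ X).toFinite.mem_toFinset.2 ⟨trivial, hx⟩))
    calc sInf {n | ∃ b : V → ZMod 2, (Fr b).ncard = n}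
        ≤ (Fr b).ncard := Nat.sInf_le ⟨b, rfl⟩
      _ ≤ X.ncard := Set.ncard_le_ncard hsub X.toFinite
      _ = frustrationIndex G := hX
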